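/- Suppose Assumptions 1 and 2 hold, λ ≥ 1, and λ < λ̄. Let (K_t, z̄_t)_{t≥0} follow the equilibrium dynamics with K_t > 0 and Φ(z̄_t) > 1 − 1/λ, and suppose (K_t, z̄_t) converges to a steady state (K*, z̄*) with K* > 0 and Φ(z̄*) > 1 − 1/λ. Set P_t = P(K_t, z̄_t). Then lim_{T→∞} q_T·P_T = 0 and P_t = V_t for all t (the land price equals its fundamental value), and the price-rent ratio P_t/F_X(K_t,1) converges to a finite positive limit. (Land Bubble Characterization Theorem, part 1: balanced growth and no bubble below the leverage threshold.) -/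

import Mathlib

open Filter Topology MeasureTheory

/-- **Assumption 1.** `Φ` (the law `μ` of productivity) is an absolutely continuous
cdf on `[0,∞)` with `Φ(z) < 1` for all `z` and a finite mean. -/
structure Assumption1 (μ : Measure ℝ) : Prop where
  prob : IsProbabilityMeasure μ
  supp : μ (Set.Iio 0) = 0
  absCont : μ ≪ MeasureTheory.volume
  lt_one : ∀ z : ℝ, μ (Set.Iic z) < 1
  finite_mean : Integrable id μ

/-- The cdf `Φ` of the productivity distribution `μ`. -/
noncomputable def Phi (μ : Measure ℝ) (z : ℝ) : ℝ := (μ (Set.Iic z)).toReal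

/-- **Assumption 2.** `F` is homogeneous of degree one, concave, continuously
differentiable with positive marginal products `FK`, `FX`, and
`F(K,1)/K → m`, `F_K(K,1) → m` as `K → ∞` with `m > 0`. -/
structure Assumption2 (F FK FX : ℝ → ℝ → ℝ) (m : ℝ) : Prop where
  pos : ∀ K X : ℝ, 0 < K → 0 < X → 0 < F K X
  homog : ∀ c K X : ℝ, 0 < c → 0 < K → 0 < X → F (c * K) (c * X) = c * F K X
  concave : ConcaveOn ℝ (Set.Ioi 0 ×ˢ Set.Ioi 0) (fun p : ℝ × ℝ => F p.1 p.2)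
  hFK : ∀ K X : ℝ, 0 < K → 0 < X → HasDerivAt (fun k => F k X) (FK K X) K
  hFX : ∀ K X : ℝ, 0 < K → 0 < X → HasDerivAt (fun x => F K x) (FX K X) X
  FK_pos : ∀ K X : ℝ, 0 < K → 0 < X → 0 < FK K X
  FX_pos : ∀ K X : ℝ, 0 < K → 0 < X → 0 < FX K X
  FK_cont : ContinuousOn (fun p : ℝ × ℝ => FK p.1 p.2) (Set.Ioi 0 ×ˢ Set.Ioi 0)
  FX_cont : ContinuousOn (fun p : ℝ × ℝ => FX p.1 p.2) (Set.Ioi 0 ×ˢ Set.Ioi 0)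
  m_pos : 0 < m
  lim_avg : Filter.Tendsto (fun K => F K 1 / K) Filter.atTop (nhds m)
  lim_FK : Filter.Tendsto (fun K => FK K 1) Filter.atTop (nhds m)

/-- The leverage threshold `λ̄ = ((1−β)/β)·(∫ max{mz−1, 0} dΦ(z))⁻¹`. -/
noncomputable def lamBar (β m : ℝ) (μ : Measure ℝ) : ℝ :=
  ((1 - β) / β) * (∫ z, max (m * z - 1) 0 ∂μ)⁻¹

/-- Aggregate wealth `W(K, z̄)` as a function of capital and the investment threshold. -/
noncomputable def Wfun (μ : Measure ℝ) (β lam : ℝ) (F : ℝ → ℝ → ℝ) (K zb : ℝ) : ℝ :=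
  F K 1 / (1 - β * (lam * Phi μ zb + 1 - lam))

/-- Land price `P(K, z̄)` as a function of capital and the investment threshold. -/
noncomputable def Pfun (μ : Measure ℝ) (β lam : ℝ) (F : ℝ → ℝ → ℝ) (K zb : ℝ) : ℝ :=
  β * (lam * Phi μ zb + 1 - lam) * F K 1 / (1 - β * (lam * Phi μ zb + 1 - lam))

open ProbabilityTheory in
lemma phi_continuous (μ : Measure ℝ) [IsProbabilityMeasure μ]
    (habs : μ ≪ MeasureTheory.volume) : Continuous (Phi μ) := by
  have hPhi : Phi μ = ⇑(cdf μ) := by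
    funext z; rw [Phi, cdf_eq_real]; rfl
  rw [hPhi, continuous_iff_continuousAt]
  intro a
  rw [(cdf μ).mono.continuousAt_iff_leftLim_eq_rightLim, StieltjesFunction.rightLim_eq]
  have h0 : (cdf μ).measure {a} = 0 := by
    rw [measure_cdf]
    exact habs (Real.volume_singleton)
  rw [StieltjesFunction.measure_singleton] at h0
  have h1 : cdf μ a - Function.leftLim (⇑(cdf μ)) a ≤ 0 := by
    simpa using ENNReal.ofReal_eq_zero.mp h0
  have h2 : Function.leftLim (⇑(cdf μ)) a ≤ cdf μ a := (cdf μ).mono.leftLim_le le_rfl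
  linarith
theorem land_bubble_characterization_fundamental
    (μ : Measure ℝ) (hμ : Assumption1 μ)
    (F FK FX : ℝ → ℝ → ℝ) (m : ℝ) (hF : Assumption2 F FK FX m)
    (β lam : ℝ) (hβ : β ∈ Set.Ioo (0 : ℝ) 1) (hlam : 1 ≤ lam)
    (hlt : lam < lamBar β m μ)
    (K zb : ℕ → ℝ) (hKpos : ∀ t, 0 < K t) (hthr : ∀ t, 1 - 1 / lam < Phi μ (zb t))
    (hdynK : ∀ t, K (t + 1) =
      β * lam * Wfun μ β lam F (K t) (zb t) * ∫ z in Set.Ioi (zb t), z ∂μ)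
    (hdynz : ∀ t, zb t = (Pfun μ β lam F (K (t + 1)) (zb (t + 1)) + FX (K (t + 1)) 1) /
      (FK (K (t + 1)) 1 * Pfun μ β lam F (K t) (zb t)))
    (Kstar zstar : ℝ) (hKstar : 0 < Kstar) (hzstar : 1 - 1 / lam < Phi μ zstar)
    (hconvK : Tendsto K atTop (𝓝 Kstar)) (hconvz : Tendsto zb atTop (𝓝 zstar))
    (P r R q V : ℕ → ℝ)
    (hP : ∀ t, P t = Pfun μ β lam F (K t) (zb t))
    (hr : ∀ t, r t = FX (K t) 1)
    (hR : ∀ t, R t = (P (t + 1) + r (t + 1)) / P t)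
    (hq : ∀ t, q t = ∏ s ∈ Finset.range t, (R s)⁻¹)
    (hV : ∀ t, V t = (q t)⁻¹ * ∑' s : ℕ, q (t + 1 + s) * r (t + 1 + s)) :
    Tendsto (fun T => q T * P T) atTop (𝓝 0) ∧
    (∀ t, P t = V t) ∧
    ∃ L : ℝ, 0 < L ∧ Tendsto (fun t => P t / r t) atTop (𝓝 L) := by
  haveI := hμ.prob
  obtain ⟨hβ0, hβ1⟩ := hβ
  have hlam0 : (0:ℝ) < lam := lt_of_lt_of_le one_pos hlam
  -- Φ(z) < 1 for all z
  have hPhi_lt_one : ∀ z : ℝ, Phi μ z < 1 := by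
    intro z
    have h := hμ.lt_one z
    have h2 : (μ (Set.Iic z)).toReal < (1 : ENNReal).toReal :=
      ENNReal.toReal_strict_mono ENNReal.one_ne_top h
    simpa [Phi] using h2
  -- key positivity facts
  have key : ∀ z : ℝ, 1 - 1 / lam < Phi μ z →
      0 < lam * Phi μ z + 1 - lam ∧ 0 < 1 - β * (lam * Phi μ z + 1 - lam) := by
    intro z hz
    have h1 : lam * (1 - 1/lam) < lam * Phi μ z := mul_lt_mul_of_pos_left hz hlam0
    have hl : lam * (1 - 1/lam) = lam - 1 := by field_simp
    have ha1 : 0 < lam * Phi μ z + 1 - lam := by nlinarith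
    have ha2 : lam * Phi μ z + 1 - lam < 1 := by nlinarith [hPhi_lt_one z]
    exact ⟨ha1, by nlinarith [mul_pos hβ0 (sub_pos.mpr ha2)]⟩
  obtain ⟨hapos, hdpos⟩ := key zstar hzstar
  have hFstar : 0 < F Kstar 1 := hF.pos Kstar 1 hKstar one_pos
  have hrstar_pos : 0 < FX Kstar 1 := hF.FX_pos Kstar 1 hKstar one_pos
  have hPstar_pos : 0 < Pfun μ β lam F Kstar zstar := by
    rw [Pfun]
    exact div_pos (mul_pos (mul_pos hβ0 hapos) hFstar) hdpos
  -- pointwise positivity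
  have hP_pos : ∀ t, 0 < P t := by
    intro t
    obtain ⟨h1, h2⟩ := key (zb t) (hthr t)
    rw [hP t, Pfun]
    exact div_pos (mul_pos (mul_pos hβ0 h1) (hF.pos _ 1 (hKpos t) one_pos)) h2
  have hr_pos : ∀ t, 0 < r t := fun t => by
    rw [hr t]; exact hF.FX_pos _ 1 (hKpos t) one_pos
  have hR_pos : ∀ t, 0 < R t := fun t => by
    rw [hR t]; exact div_pos (add_pos (hP_pos _) (hr_pos _)) (hP_pos t)
  have hq_pos : ∀ t, 0 < q t := fun t => by
    rw [hq t]; exact Finset.prod_pos fun s _ => inv_pos.mpr (hR_pos s)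
  -- limits
  have hPhit : Tendsto (fun t => Phi μ (zb t)) atTop (𝓝 (Phi μ zstar)) :=
    ((phi_continuous μ hμ.absCont).continuousAt).tendsto.comp hconvz
  have hFt : Tendsto (fun t => F (K t) 1) atTop (𝓝 (F Kstar 1)) :=
    ((hF.hFK Kstar 1 hKstar one_pos).continuousAt).tendsto.comp hconvK
  have hat : Tendsto (fun t => lam * Phi μ (zb t) + 1 - lam) atTop
      (𝓝 (lam * Phi μ zstar + 1 - lam)) :=
    ((hPhit.const_mul lam).add_const (1:ℝ)).sub_const lam
  have hdent : Tendsto (fun t => 1 - β * (lam * Phi μ (zb t) + 1 - lam)) atTop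
      (𝓝 (1 - β * (lam * Phi μ zstar + 1 - lam))) :=
    (hat.const_mul β).const_sub 1
  have hPt : Tendsto P atTop (𝓝 (Pfun μ β lam F Kstar zstar)) := by
    have h : Tendsto (fun t => Pfun μ β lam F (K t) (zb t)) atTop
        (𝓝 (Pfun μ β lam F Kstar zstar)) := by
      unfold Pfun
      exact ((hat.const_mul β).mul hFt).div hdent (ne_of_gt hdpos)
    exact h.congr fun t => (hP t).symm
  have hrt : Tendsto r atTop (𝓝 (FX Kstar 1)) := by
    have hc : ContinuousAt (fun p : ℝ × ℝ => FX p.1 p.2) (Kstar, 1) :=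
      hF.FX_cont.continuousAt ((isOpen_Ioi.prod isOpen_Ioi).mem_nhds
        (Set.mk_mem_prod (Set.mem_Ioi.mpr hKstar) (Set.mem_Ioi.mpr one_pos)))
    have h : Tendsto (fun t => FX (K t) 1) atTop (𝓝 (FX Kstar 1)) :=
      hc.tendsto.comp (hconvK.prodMk_nhds tendsto_const_nhds)
    exact h.congr fun t => (hr t).symm
  have hRt : Tendsto R atTop
      (𝓝 ((Pfun μ β lam F Kstar zstar + FX Kstar 1) / Pfun μ β lam F Kstar zstar)) := by
    have h1 : Tendsto (fun t => P (t+1)) atTop (𝓝 (Pfun μ β lam F Kstar zstar)) :=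
      hPt.comp (tendsto_add_atTop_nat 1)
    have h2 : Tendsto (fun t => r (t+1)) atTop (𝓝 (FX Kstar 1)) :=
      hrt.comp (tendsto_add_atTop_nat 1)
    have h := (h1.add h2).div hPt (ne_of_gt hPstar_pos)
    exact h.congr fun t => (hR t).symm
  have hRstar1 : 1 < (Pfun μ β lam F Kstar zstar + FX Kstar 1) / Pfun μ β lam F Kstar zstar := by
    rw [lt_div_iff₀ hPstar_pos]; linarith
  -- q → 0
  set Rs := (Pfun μ β lam F Kstar zstar + FX Kstar 1) / Pfun μ β lam F Kstar zstar with hRs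
  set c := (Rs + 1) / 2 with hc
  have hc1 : 1 < c := by rw [hc]; linarith
  have hcR : c < Rs := by rw [hc]; linarith
  have hc0 : 0 < c := lt_trans one_pos hc1
  have hev : ∀ᶠ t in atTop, c < R t := hRt.eventually (eventually_gt_nhds hcR)
  obtain ⟨N, hN⟩ := eventually_atTop.mp hev
  have hgeo : ∀ n, q (N + n) ≤ q N * (c⁻¹) ^ n := by
    intro n
    induction n with
    | zero => simp
    | succ n ih =>
      have hq' : q (N + n + 1) = q (N + n) * (R (N + n))⁻¹ := by
        rw [hq (N+n+1), hq (N+n), Finset.prod_range_succ]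
      have hRc : c < R (N + n) := hN _ (Nat.le_add_right N n)
      have hinv : (R (N+n))⁻¹ ≤ c⁻¹ := by
        apply inv_anti₀ hc0 hRc.le
      calc q (N + (n+1)) = q (N + n) * (R (N + n))⁻¹ := hq'
        _ ≤ (q N * c⁻¹ ^ n) * c⁻¹ :=
            mul_le_mul ih hinv (inv_nonneg.mpr (hR_pos _).le)
              (le_of_lt (mul_pos (hq_pos N) (pow_pos (inv_pos.mpr hc0) n)))
        _ = q N * c⁻¹ ^ (n+1) := by ring
  have hq0 : Tendsto q atTop (𝓝 0) := by
    have hgl : Tendsto (fun n : ℕ => q N * (c⁻¹)^n) atTop (𝓝 0) := by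
      have h : Tendsto (fun n : ℕ => (c⁻¹)^n) atTop (𝓝 0) :=
        tendsto_pow_atTop_nhds_zero_of_lt_one (inv_nonneg.mpr hc0.le)
          (inv_lt_one_of_one_lt₀ hc1)
      simpa using h.const_mul (q N)
    rw [← tendsto_add_atTop_iff_nat N]
    exact squeeze_zero (fun n => (hq_pos _).le)
      (fun n => by rw [Nat.add_comm]; exact hgeo n) hgl
  have hqP0 : Tendsto (fun T => q T * P T) atTop (𝓝 0) := by
    simpa using hq0.mul hPt
  -- recurrence
  have hrec : ∀ s, q s * P s = q (s+1) * P (s+1) + q (s+1) * r (s+1) := by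
    intro s
    have hq' : q (s+1) = q s * (R s)⁻¹ := by
      rw [hq (s+1), hq s, Finset.prod_range_succ]
    have hRP : R s * P s = P (s+1) + r (s+1) := by
      rw [hR s]; exact div_mul_cancel₀ _ (ne_of_gt (hP_pos s))
    have hRne : R s ≠ 0 := ne_of_gt (hR_pos s)
    calc q s * P s = q s * (R s)⁻¹ * (R s * P s) := by
          rw [mul_assoc, inv_mul_cancel_left₀ hRne]
      _ = q s * (R s)⁻¹ * (P (s+1) + r (s+1)) := by rw [hRP]
      _ = q (s+1) * P (s+1) + q (s+1) * r (s+1) := by rw [hq']; ring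
  -- telescoping
  have htel : ∀ t n, ∑ s ∈ Finset.range n, q (t+1+s) * r (t+1+s)
      = q t * P t - q (t+n) * P (t+n) := by
    intro t n
    induction n with
    | zero => simp
    | succ n ih =>
      rw [Finset.sum_range_succ, ih]
      have h := hrec (t + n)
      have e : t + 1 + n = t + n + 1 := by omega
      rw [e]
      have e2 : t + (n+1) = t + n + 1 := by omega
      rw [e2]
      linarith
  -- tsum identification
  have hfun_eq : ∀ t, (∑' s : ℕ, q (t+1+s) * r (t+1+s)) = q t * P t := by
    intro t
    have hnn : ∀ s : ℕ, 0 ≤ q (t+1+s) * r (t+1+s) :=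
      fun s => le_of_lt (mul_pos (hq_pos _) (hr_pos _))
    have hbd : ∀ n, ∑ s ∈ Finset.range n, q (t+1+s) * r (t+1+s) ≤ q t * P t := by
      intro n
      rw [htel t n]
      have h : 0 < q (t+n) * P (t+n) := mul_pos (hq_pos _) (hP_pos _)
      linarith
    have hsum : Summable (fun s => q (t+1+s) * r (t+1+s)) :=
      summable_of_sum_range_le hnn hbd
    have h2 : Tendsto (fun n => q (t+n) * P (t+n)) atTop (𝓝 0) := by
      have h := hqP0.comp (tendsto_add_atTop_nat t)
      exact h.congr fun n => by simp [Nat.add_comm]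
    have hlim : Tendsto (fun n => ∑ s ∈ Finset.range n, q (t+1+s) * r (t+1+s))
        atTop (𝓝 (q t * P t)) := by
      have h := (tendsto_const_nhds (x := q t * P t)).sub h2
      have h' := h.congr fun n => (htel t n).symm
      simpa using h'
    exact tendsto_nhds_unique hsum.hasSum.tendsto_sum_nat hlim
  refine ⟨hqP0, ?_, ?_⟩
  · intro t
    rw [hV t, hfun_eq t, ← mul_assoc, inv_mul_cancel₀ (ne_of_gt (hq_pos t)), one_mul]
  · exact ⟨Pfun μ β lam F Kstar zstar / FX Kstar 1,
      div_pos hPstar_pos hrstar_pos, hPt.div hrt (ne_of_gt hrstar_pos)⟩
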